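/- Temple inequality application to the truncated Anderson Hamiltonian: Let B ⊂ V be a finite set with |B| = N, let −Δ^N be the Neumann Laplacian on B with first nonzero eigenvalue E₁(−Δ^N) ≥ c₀ r^{−β}, and let W : B → [0, (c₀/3) r^{−β}] be any potential. Set H̃ = −Δ^N + W. Then the smallest eigenvalue satisfies E₀(H̃) ≥ (1/(2N)) Σ_{x∈B} W(x). -/

import Mathlib

open Matrix

open scoped RealInnerProductSpace

lemma spec_quadratic_lower {n : Type*} [Fintype n] [DecidableEq n]
    (M : Matrix n n ℝ) (hM : M.IsHermitian) (lam : ℝ)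
    (hker : ∀ f : n → ℝ, M.mulVec f = 0 → ∃ c : ℝ, ∀ x, f x = c)
    (hgap : ∀ t ∈ spectrum ℝ M, t ≠ 0 → lam ≤ t)
    (w : n → ℝ) (hw : ∑ x, w x = 0) :
    lam * ∑ x, (w x) ^ 2 ≤ ∑ x, w x * M.mulVec w x := by
  classical
  set b := hM.eigenvectorBasis with hb
  set μ := hM.eigenvalues with hμ
  set wE : EuclideanSpace ℝ n := (WithLp.equiv 2 (n → ℝ)).symm w with hwE
  have hinner : ∀ u v : EuclideanSpace ℝ n, ⟪u, v⟫ = ∑ x, u x * v x := by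
    intro u v
    simp [PiLp.inner_apply, starRingEnd_apply, star_trivial, mul_comm]
  set c : n → ℝ := fun i => ⟪wE, b i⟫ with hc
  have hMb : ∀ i, M.mulVec ⇑(b i) = μ i • ⇑(b i) := fun i => hM.mulVec_eigenvectorBasis i
  have hci : ∀ i, c i = ∑ x, w x * (b i) x := by
    intro i; rw [hc]; exact hinner wE (b i)
  -- eigenvalue-zero components vanish
  have hc0 : ∀ i, μ i = 0 → c i = 0 := by
    intro i hi
    obtain ⟨k, hk⟩ := hker ⇑(b i) (by rw [hMb i, hi, zero_smul])
    rw [hci]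
    calc ∑ x, w x * (b i) x = ∑ x, w x * k := by
          exact Finset.sum_congr rfl fun x _ => congrArg (w x * ·) (hk x)
      _ = (∑ x, w x) * k := by rw [Finset.sum_mul]
      _ = 0 := by rw [hw, zero_mul]
  -- norm identity
  have hsum1 : ∑ x, (w x) ^ 2 = ∑ i, (c i) ^ 2 := by
    have h1 : ⟪wE, wE⟫ = ∑ i, ⟪wE, b i⟫ * ⟪b i, wE⟫ :=
      (b.sum_inner_mul_inner wE wE).symm
    have h2 : ∀ i, ⟪b i, wE⟫ = c i := fun i => real_inner_comm _ _
    rw [hinner] at h1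
    calc ∑ x, (w x) ^ 2 = ∑ x, wE x * wE x := by
          exact Finset.sum_congr rfl fun x _ => by rw [sq]; rfl
      _ = ∑ i, ⟪wE, b i⟫ * ⟪b i, wE⟫ := h1
      _ = ∑ i, (c i) ^ 2 := Finset.sum_congr rfl fun i _ => by
            rw [h2 i, show (⟪wE, b i⟫ : ℝ) = c i from rfl]; ring
  -- quadratic form identity
  have hMT : Mᵀ = M := by
    ext x y
    simp only [Matrix.transpose_apply]
    conv_rhs => rw [← hM]
    simp [Matrix.conjTranspose_apply]
  have hsum2 : ∑ x, w x * M.mulVec w x = ∑ i, μ i * (c i) ^ 2 := by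
    set MwE : EuclideanSpace ℝ n := (WithLp.equiv 2 (n → ℝ)).symm (M.mulVec w) with hMwE
    have h1 : ⟪wE, MwE⟫ = ∑ i, ⟪wE, b i⟫ * ⟪b i, MwE⟫ :=
      (b.sum_inner_mul_inner wE MwE).symm
    have h2 : ∀ i, ⟪b i, MwE⟫ = μ i * c i := by
      intro i
      rw [hinner]
      have : ∑ x, (b i) x * MwE x = ⇑(b i) ⬝ᵥ (M.mulVec w) := rfl
      rw [this, Matrix.dotProduct_mulVec, ← Matrix.mulVec_transpose, hMT, hMb i]
      have : (μ i • ⇑(b i)) ⬝ᵥ w = μ i * (⇑(b i) ⬝ᵥ w) := smul_dotProduct _ _ _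
      rw [this]
      congr 1
    calc ∑ x, w x * M.mulVec w x = ⟪wE, MwE⟫ := by rw [hinner]; rfl
      _ = ∑ i, ⟪wE, b i⟫ * ⟪b i, MwE⟫ := h1
      _ = ∑ i, μ i * (c i) ^ 2 := Finset.sum_congr rfl fun i _ => by
            rw [h2 i, show (⟪wE, b i⟫ : ℝ) = c i from rfl]; ring
  rw [hsum1, hsum2, Finset.mul_sum]
  apply Finset.sum_le_sum
  intro i _
  by_cases hi : μ i = 0
  · rw [hc0 i hi, hi]; simp
  · exact mul_le_mul_of_nonneg_right (hgap (μ i) (hM.eigenvalues_mem_spectrum_real i) hi)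
      (sq_nonneg _)

/-- Temple inequality applied to the truncated Anderson Hamiltonian:
the ground state energy of the Neumann Laplacian plus a small truncated potential is
at least half the mean of the potential. -/
theorem temple_truncated_anderson
    {V : Type*} [DecidableEq V] (G : SimpleGraph V) [DecidableRel G.Adj]
    (B : Finset V) (hB : B.Nonempty)
    (L : Matrix B B ℝ)
    (hL : ∀ x y : B, L x y =
      if x = y then ((B.filter (fun u => G.Adj ↑x u)).card : ℝ)
      else if G.Adj (↑x : V) (↑y : V) then -1 else 0)
    (c₀ r β : ℝ) (hc₀ : 0 < c₀) (hr : 0 < r)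
    (hker : ∀ f : B → ℝ, L.mulVec f = 0 → ∃ c : ℝ, ∀ x, f x = c)
    (hgap : ∀ t ∈ spectrum ℝ L, t ≠ 0 → c₀ * r ^ (-β) ≤ t)
    (W : B → ℝ) (hW : ∀ x, 0 ≤ W x ∧ W x ≤ (c₀ / 3) * r ^ (-β)) :
    ∀ t ∈ spectrum ℝ (L + Matrix.diagonal W),
      (1 / (2 * (B.card : ℝ))) * ∑ x : B, W x ≤ t := by
  classical
  intro t ht
  set lam := c₀ * r ^ (-β) with hlamdef
  have hlam : 0 < lam := mul_pos hc₀ (Real.rpow_pos_of_pos hr _)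
  have hN : 0 < (B.card : ℝ) := by exact_mod_cast Finset.card_pos.mpr hB
  set N := (B.card : ℝ) with hNdef
  set cc := (1 / (2 * N)) * ∑ x : B, W x with hccdef
  -- symmetry of entries
  have hent : ∀ x y : B, L x y = L y x := by
    intro x y
    rw [hL, hL]
    by_cases h : x = y
    · subst h; rfl
    · rw [if_neg h, if_neg (Ne.symm h)]
      by_cases hadj : G.Adj (↑x : V) ↑y
      · rw [if_pos hadj, if_pos (G.adj_symm hadj)]
      · rw [if_neg hadj, if_neg fun h' => hadj (G.adj_symm h')]
  have hherm : L.IsHermitian := by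
    ext x y
    simp only [Matrix.conjTranspose_apply, star_trivial]
    exact hent y x
  -- row sums vanish
  have hrow : ∀ x : B, ∑ y : B, L x y = 0 := by
    intro x
    have hkey : ∀ y : B, L x y =
        (if x = y then ((B.filter (fun u => G.Adj ↑x u)).card : ℝ) else 0)
        + (if G.Adj (↑x : V) ↑y then -1 else 0) := by
      intro y
      rw [hL]
      by_cases h : x = y
      · subst h; simp
      · simp [h]
    rw [Finset.sum_congr rfl fun y _ => hkey y, Finset.sum_add_distrib,
      Finset.sum_ite_eq]
    have h2 : ∑ y : B, (if G.Adj (↑x : V) ↑y then (-1 : ℝ) else 0)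
        = -((B.filter (fun u => G.Adj ↑x u)).card : ℝ) := by
      rw [Finset.sum_coe_sort B (fun u => if G.Adj (↑x : V) u then (-1 : ℝ) else 0),
        Finset.sum_ite, Finset.sum_const, Finset.sum_const_zero]
      simp
    rw [h2]
    simp
  have hcol : ∀ y : B, ∑ x : B, L x y = 0 := by
    intro y
    rw [Finset.sum_congr rfl fun x _ => hent x y]
    exact hrow y
  -- total sum of mulVec vanishes
  have hLsum : ∀ u : B → ℝ, ∑ x : B, (L.mulVec u) x = 0 := by
    intro u
    simp only [Matrix.mulVec, dotProduct]
    rw [Finset.sum_comm]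
    calc ∑ y : B, ∑ x : B, L x y * u y
        = ∑ y : B, (∑ x : B, L x y) * u y := by
          exact Finset.sum_congr rfl fun y _ => (Finset.sum_mul _ _ _).symm
      _ = ∑ y : B, (0:ℝ) * u y := Finset.sum_congr rfl fun y _ => by rw [hcol y]
      _ = 0 := by simp
  -- mulVec kills constants
  have hone : L.mulVec (fun _ => (1 : ℝ)) = 0 := by
    funext x
    simp only [Matrix.mulVec, dotProduct, mul_one]
    exact hrow x
  -- eigenvector
  set H := L + Matrix.diagonal W with hH
  obtain ⟨v, hv0, hveq⟩ : ∃ v : B → ℝ, v ≠ 0 ∧ H.mulVec v = t • v := by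
    rw [spectrum.mem_iff] at ht
    have hdet : (algebraMap ℝ (Matrix B B ℝ) t - H).det = 0 := by
      by_contra hd
      exact ht ((Matrix.isUnit_iff_isUnit_det _).mpr (isUnit_iff_ne_zero.mpr hd))
    obtain ⟨v, hv0, hv⟩ := (Matrix.exists_mulVec_eq_zero_iff).mpr hdet
    refine ⟨v, hv0, ?_⟩
    rw [Matrix.sub_mulVec] at hv
    have h1 : (algebraMap ℝ (Matrix B B ℝ) t) *ᵥ v = t • v := by
      rw [Algebra.algebraMap_eq_smul_one, Matrix.smul_mulVec, Matrix.one_mulVec]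
    rw [h1] at hv
    rw [← sub_eq_zero]
    rw [sub_eq_zero] at hv ⊢
    exact hv.symm
  set a := (∑ x : B, v x) / N with hadef
  set w : B → ℝ := fun x => v x - a with hwdef
  have hvw : ∀ x, v x = a + w x := fun x => by simp [hwdef]
  have hwsum : ∑ x : B, w x = 0 := by
    simp only [hwdef]
    rw [Finset.sum_sub_distrib, Finset.sum_const, Finset.card_univ, Fintype.card_coe,
      nsmul_eq_mul, hadef]
    field_simp
    simp [hNdef]
  -- L quadratic forms
  have hLv : L.mulVec v = L.mulVec w := by
    have : v = fun x => w x + a * 1 := by funext x; simp [hvw x]; ring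
    rw [this]
    have : (fun x => w x + a * 1) = w + a • (fun _ => (1 : ℝ)) := by
      funext x; simp
    rw [this, Matrix.mulVec_add, Matrix.mulVec_smul, hone]
    simp
  have hvLv : ∑ x : B, v x * (L.mulVec v) x = ∑ x : B, w x * (L.mulVec w) x := by
    rw [hLv]
    calc ∑ x : B, v x * (L.mulVec w) x
        = ∑ x : B, (w x * (L.mulVec w) x + a * (L.mulVec w) x) := by
          exact Finset.sum_congr rfl fun x _ => by rw [hvw x]; ring
      _ = ∑ x : B, w x * (L.mulVec w) x + a * ∑ x : B, (L.mulVec w) x := by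
          rw [Finset.sum_add_distrib, Finset.mul_sum]
      _ = ∑ x : B, w x * (L.mulVec w) x := by rw [hLsum w]; ring
  -- expand v (H v)
  have hexp : ∑ x : B, v x * (H.mulVec v) x
      = ∑ x : B, w x * (L.mulVec w) x + ∑ x : B, W x * (v x) ^ 2 := by
    rw [hH]
    calc ∑ x : B, v x * ((L + Matrix.diagonal W).mulVec v) x
        = ∑ x : B, (v x * (L.mulVec v) x + W x * (v x) ^ 2) := by
          refine Finset.sum_congr rfl fun x _ => ?_
          rw [Matrix.add_mulVec]
          have : ((Matrix.diagonal W).mulVec v) x = W x * v x :=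
            Matrix.mulVec_diagonal W v x
          simp only [Pi.add_apply, this]
          ring
      _ = _ := by rw [Finset.sum_add_distrib, hvLv]
  -- eigen equation
  have heig : ∑ x : B, v x * (H.mulVec v) x = t * ∑ x : B, (v x) ^ 2 := by
    rw [hveq, Finset.mul_sum]
    exact Finset.sum_congr rfl fun x _ => by simp [sq]; ring
  -- spectral lower bound on L-part
  have hQ := spec_quadratic_lower L hherm lam hker hgap w hwsum
  -- bounds on cc
  have hWle : ∀ x, W x ≤ lam / 3 := by
    intro x
    have := (hW x).2
    rw [hlamdef]; nlinarith [this]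
  have hcc0 : 0 ≤ cc := by
    rw [hccdef]
    apply mul_nonneg
    · exact div_nonneg zero_le_one (by linarith)
    · exact Finset.sum_nonneg fun x _ => (hW x).1
  have hccle : cc ≤ lam / 6 := by
    have hsW : ∑ x : B, W x ≤ N * (lam / 3) := by
      have := Finset.sum_le_card_nsmul Finset.univ W (lam / 3)
        (fun x _ => hWle x)
      rw [Finset.card_univ, Fintype.card_coe, nsmul_eq_mul] at this
      exact this
    rw [hccdef]
    rw [div_mul_eq_mul_div, one_mul, div_le_div_iff₀ (by linarith) (by norm_num)]
    nlinarith [hsW, hN]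
  -- pointwise inequality
  have hpt : ∀ x : B, (W x / 2) * a ^ 2 + cc * (w x) ^ 2
      ≤ lam * (w x) ^ 2 + W x * (a + w x) ^ 2 := by
    intro x
    have h1 : 0 ≤ lam - cc - W x := by
      have := hWle x; linarith
    have key : lam * (w x) ^ 2 + W x * (a + w x) ^ 2
        - ((W x / 2) * a ^ 2 + cc * (w x) ^ 2)
        = (lam - cc - W x) * (w x) ^ 2 + (W x / 2) * (a + 2 * w x) ^ 2 := by ring
    nlinarith [mul_nonneg h1 (sq_nonneg (w x)),
      mul_nonneg (by linarith [(hW x).1] : (0:ℝ) ≤ W x / 2) (sq_nonneg (a + 2 * w x))]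
  -- sum the pointwise inequality
  have hmain : cc * ∑ x : B, (v x) ^ 2 ≤ t * ∑ x : B, (v x) ^ 2 := by
    have hvsq : ∑ x : B, (v x) ^ 2 = N * a ^ 2 + ∑ x : B, (w x) ^ 2 := by
      calc ∑ x : B, (v x) ^ 2 = ∑ x : B, (a ^ 2 + 2 * a * w x + (w x) ^ 2) := by
            exact Finset.sum_congr rfl fun x _ => by rw [hvw x]; ring
        _ = N * a ^ 2 + ∑ x : B, (w x) ^ 2 := by
            rw [Finset.sum_add_distrib, Finset.sum_add_distrib, Finset.sum_const,
              Finset.card_univ, Fintype.card_coe, ← Finset.mul_sum, hwsum]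
            simp only [nsmul_eq_mul, hNdef]
            ring
    have hsum_pt : ∑ x : B, ((W x / 2) * a ^ 2 + cc * (w x) ^ 2)
        ≤ ∑ x : B, (lam * (w x) ^ 2 + W x * (a + w x) ^ 2) :=
      Finset.sum_le_sum fun x _ => hpt x
    have hlhs : ∑ x : B, ((W x / 2) * a ^ 2 + cc * (w x) ^ 2)
        = cc * ∑ x : B, (v x) ^ 2 := by
      rw [Finset.sum_add_distrib, ← Finset.sum_mul, ← Finset.mul_sum, hvsq]
      rw [hccdef]
      have : ∑ x : B, W x / 2 = (∑ x : B, W x) / 2 := by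
        rw [Finset.sum_div]
      rw [this]
      field_simp
    have hrhs : ∑ x : B, (lam * (w x) ^ 2 + W x * (a + w x) ^ 2)
        ≤ t * ∑ x : B, (v x) ^ 2 := by
      rw [← heig, hexp, Finset.sum_add_distrib, ← Finset.mul_sum]
      have : ∑ x : B, W x * (a + w x) ^ 2 = ∑ x : B, W x * (v x) ^ 2 := by
        exact Finset.sum_congr rfl fun x _ => by rw [hvw x]
      rw [this]
      exact add_le_add_left hQ _
    calc cc * ∑ x : B, (v x) ^ 2 = ∑ x : B, ((W x / 2) * a ^ 2 + cc * (w x) ^ 2) :=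
          hlhs.symm
      _ ≤ ∑ x : B, (lam * (w x) ^ 2 + W x * (a + w x) ^ 2) := hsum_pt
      _ ≤ t * ∑ x : B, (v x) ^ 2 := hrhs
  have hvpos : 0 < ∑ x : B, (v x) ^ 2 := by
    obtain ⟨x, hx⟩ := Function.ne_iff.mp hv0
    refine Finset.sum_pos' (fun y _ => sq_nonneg _) ⟨x, Finset.mem_univ x, ?_⟩
    exact lt_of_le_of_ne (sq_nonneg _) (Ne.symm (pow_ne_zero 2 hx))
  exact le_of_mul_le_mul_right (by simpa [mul_comm] using hmain) hvpos
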